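/- For all positive integers m, n and all real x, y, the squared norm of ∂φ_{m,n}/∂y in ℂ³ ≅ ℝ⁶ equals (m+n)·(m+n − (m−n)cos 2x)/2. -/

import Mathlib

open Real Complex

/-- The doubly periodic immersion `φ_{m,n} : ℝ² → ℂ³` of Karpukhin's family of
minimal tori of revolution in `S⁵ ⊂ ℂ³`. -/
noncomputable def phiMN (m n : ℕ) (x y : ℝ) : Fin 3 → ℂ :=
  ![(Real.sqrt (((m : ℝ) + n) / (2 * m + n)) : ℂ) * Complex.exp (Complex.I * m * y) *
      (Real.sin x : ℂ),
    (Real.sqrt (((m : ℝ) + n) / (m + 2 * n)) : ℂ) * Complex.exp (Complex.I * n * y) *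
      (Real.cos x : ℂ),
    (Real.sqrt ((n : ℝ) * Real.cos x ^ 2 / (m + 2 * n) +
        (m : ℝ) * Real.sin x ^ 2 / (2 * m + n)) : ℂ) *
      Complex.exp (-(Complex.I * ((m : ℝ) + n) * y))]

/-- The squared norm of `∂φ_{m,n}/∂y` in `ℂ³ ≅ ℝ⁶` equals
`(m+n)·(m+n − (m−n)cos 2x)/2`. -/
theorem phiMN_partial_y_sq_norm (m n : ℕ) (hm : 0 < m) (hn : 0 < n) (x y : ℝ) :
    ∑ j : Fin 3, ‖deriv (fun s : ℝ => phiMN m n x s j) y‖ ^ 2 =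
      ((m : ℝ) + n) * (((m : ℝ) + n) - ((m : ℝ) - n) * Real.cos (2 * x)) / 2 := by
  have hm' : (0:ℝ) < m := by exact_mod_cast hm
  have hn' : (0:ℝ) < n := by exact_mod_cast hn
  have key : ∀ (c d a : ℂ),
      deriv (fun s : ℝ => c * Complex.exp (a * s) * d) y
        = c * (Complex.exp (a * y) * a) * d := by
    intro c d a
    have h1 : HasDerivAt (fun s : ℝ => a * (s : ℂ)) a y := by
      simpa using (Complex.ofRealCLM.hasDerivAt (x := y)).const_mul a
    exact (((h1.cexp).const_mul c).mul_const d).deriv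
  have h0 : deriv (fun s : ℝ => phiMN m n x s 0) y
      = (Real.sqrt (((m : ℝ) + n) / (2 * m + n)) : ℂ)
          * (Complex.exp (Complex.I * m * y) * (Complex.I * m)) * (Real.sin x : ℂ) := by
    simp only [phiMN, Matrix.cons_val_zero]
    exact key _ _ _
  have h1 : deriv (fun s : ℝ => phiMN m n x s 1) y
      = (Real.sqrt (((m : ℝ) + n) / (m + 2 * n)) : ℂ)
          * (Complex.exp (Complex.I * n * y) * (Complex.I * n)) * (Real.cos x : ℂ) := by
    simp only [phiMN, Matrix.cons_val_one, Matrix.head_cons]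
    exact key _ _ _
  have h2 : deriv (fun s : ℝ => phiMN m n x s 2) y
      = (Real.sqrt ((n : ℝ) * Real.cos x ^ 2 / (m + 2 * n) +
            (m : ℝ) * Real.sin x ^ 2 / (2 * m + n)) : ℂ)
          * (Complex.exp ((-(Complex.I * ((m : ℝ) + n))) * y)
              * (-(Complex.I * ((m : ℝ) + n)))) * 1 := by
    simp only [phiMN, Matrix.cons_val_two, Matrix.tail_cons, Matrix.head_cons]
    have e : (fun s : ℝ =>
        (Real.sqrt ((n : ℝ) * Real.cos x ^ 2 / (m + 2 * n) +
            (m : ℝ) * Real.sin x ^ 2 / (2 * m + n)) : ℂ) *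
          Complex.exp (-(Complex.I * ((m : ℝ) + n) * s)))
        = fun s : ℝ =>
        (Real.sqrt ((n : ℝ) * Real.cos x ^ 2 / (m + 2 * n) +
            (m : ℝ) * Real.sin x ^ 2 / (2 * m + n)) : ℂ) *
          Complex.exp ((-(Complex.I * ((m : ℝ) + n))) * s) * 1 := by
      funext s; rw [mul_one, neg_mul]
    rw [e, key]
  rw [Fin.sum_univ_three, h0, h1, h2]
  have habs : ∀ z : ℂ, z.re = 0 → ‖Complex.exp z‖ = 1 := by
    intro z hz; rw [Complex.norm_exp, hz, Real.exp_zero]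
  simp only [norm_mul, norm_neg, Complex.norm_I, Complex.norm_real, Real.norm_eq_abs, Complex.norm_natCast,
    norm_one, mul_one, one_mul]
  rw [habs _ (by simp), habs _ (by simp), habs _ (by simp)]
  have hs1 : Real.sqrt (((m : ℝ) + n) / (2 * m + n)) ^ 2 = ((m : ℝ) + n) / (2 * m + n) :=
    Real.sq_sqrt (by positivity)
  have hs2 : Real.sqrt (((m : ℝ) + n) / (m + 2 * n)) ^ 2 = ((m : ℝ) + n) / (m + 2 * n) :=
    Real.sq_sqrt (by positivity)
  have hs3 : Real.sqrt ((n : ℝ) * Real.cos x ^ 2 / (m + 2 * n) +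
      (m : ℝ) * Real.sin x ^ 2 / (2 * m + n)) ^ 2
      = (n : ℝ) * Real.cos x ^ 2 / (m + 2 * n) + (m : ℝ) * Real.sin x ^ 2 / (2 * m + n) :=
    Real.sq_sqrt (by positivity)
  have habsm : ‖(((m : ℝ) : ℂ) + (n : ℂ))‖ = (m : ℝ) + n := by
    rw [show (((m : ℝ) : ℂ) + (n : ℂ)) = (((m : ℝ) + n : ℝ) : ℂ) by push_cast; ring,
      Complex.norm_real, Real.norm_eq_abs, abs_of_pos (by positivity)]
  simp only [one_mul, habsm, mul_pow, _root_.sq_abs, hs1, hs2, hs3]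
  have hcos : Real.cos (2 * x) = 1 - 2 * Real.sin x ^ 2 := by
    rw [Real.cos_two_mul']; nlinarith [Real.sin_sq_add_cos_sq x]
  have hsc : Real.cos x ^ 2 = 1 - Real.sin x ^ 2 := by nlinarith [Real.sin_sq_add_cos_sq x]
  rw [hcos, hsc]
  have d1 : (2 * (m : ℝ) + n) ≠ 0 := by positivity
  have d2 : ((m : ℝ) + 2 * n) ≠ 0 := by positivity
  field_simp
  ring
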